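/- Let v₁, …, v_m ∈ ℝ² be nonzero vectors that are pairwise linearly independent. Then there exist signs ε₁, …, ε_m ∈ {−1,1} and a permutation σ of {1,…,m} such that for all j < k, the 2D cross product (ε_{σ(j)} v_{σ(j)}) × (ε_{σ(k)} v_{σ(k)}) > 0 (where (a₁,a₂) × (b₁,b₂) = a₁b₂ − a₂b₁). -/

import Mathlib

/-- The 'fan' property: pairwise non-parallel plane vectors can be reoriented by
signs and reordered so that all pairs are positively oriented. -/
theorem fan_ordering (m : ℕ) (v : Fin m → (Fin 2 → ℝ))
    (hpair : ∀ j k : Fin m, j ≠ k → LinearIndependent ℝ ![v j, v k]) :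
    ∃ (ε : Fin m → ℝ) (σ : Equiv.Perm (Fin m)),
      (∀ j, ε j = -1 ∨ ε j = 1) ∧
      ∀ j k : Fin m, j < k →
        0 < (ε (σ j) • v (σ j)) 0 * (ε (σ k) • v (σ k)) 1
            - (ε (σ j) • v (σ j)) 1 * (ε (σ k) • v (σ k)) 0 := by
  classical
  -- choose signs so that each ε j • v j lies in the closed upper half-plane
  -- (with the positive x-axis, excluding the negative x-axis)
  set ε : Fin m → ℝ :=
    fun j => if 0 < v j 1 ∨ (v j 1 = 0 ∧ 0 < v j 0) then 1 else -1 with hε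
  have hεsign : ∀ j, ε j = -1 ∨ ε j = 1 := by
    intro j; by_cases h : 0 < v j 1 ∨ (v j 1 = 0 ∧ 0 < v j 0) <;> simp [hε, h]
  have hεne : ∀ j, ε j ≠ 0 := by
    intro j; rcases hεsign j with h | h <;> rw [h] <;> norm_num
  set w : Fin m → Fin 2 → ℝ := fun j => ε j • v j with hw
  set z : Fin m → ℂ := fun j => ⟨w j 0, w j 1⟩ with hz
  set θ : Fin m → ℝ := fun j => (z j).arg with hθ
  have hw0 : ∀ j, w j 0 = ε j * v j 0 := fun j => rfl
  have hw1 : ∀ j, w j 1 = ε j * v j 1 := fun j => rfl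
  -- each w j has nonnegative second coordinate
  have him : ∀ j, 0 ≤ (z j).im := by
    intro j
    show 0 ≤ w j 1
    rw [hw1]
    rcases lt_trichotomy (v j 1) 0 with h | h | h
    · have hc : ¬ (0 < v j 1 ∨ (v j 1 = 0 ∧ 0 < v j 0)) := by
        push_neg
        exact ⟨le_of_lt h, fun h' => absurd h' (by linarith)⟩
      simp only [hε, if_neg hc]
      nlinarith
    · simp [h]
    · have hc : 0 < v j 1 ∨ (v j 1 = 0 ∧ 0 < v j 0) := Or.inl h
      simp only [hε, if_pos hc]
      linarith
  have hθnonneg : ∀ j, 0 ≤ θ j := fun j => Complex.arg_nonneg_iff.mpr (him j)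
  have hθltpi : ∀ j, θ j < Real.pi := by
    intro j
    refine lt_of_le_of_ne (Complex.arg_le_pi _) ?_
    intro hpi
    rw [Complex.arg_eq_pi_iff] at hpi
    obtain ⟨hre, himz⟩ := hpi
    have h1 : w j 1 = 0 := himz
    have hv1 : v j 1 = 0 := by
      have := h1; rw [hw1] at this
      exact (mul_eq_zero.mp this).resolve_left (hεne j)
    have hre' : ε j * v j 0 < 0 := by rw [← hw0]; exact hre
    by_cases hc : 0 < v j 1 ∨ (v j 1 = 0 ∧ 0 < v j 0)
    · have hεj : ε j = 1 := by simp only [hε]; rw [if_pos hc]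
      rw [hεj, one_mul] at hre'
      rcases hc with h | hh
      · rw [hv1] at h; linarith
      · linarith [hh.2]
    · have hεj : ε j = -1 := by simp only [hε]; rw [if_neg hc]
      push_neg at hc
      have h0 : v j 0 ≤ 0 := hc.2 hv1
      rw [hεj] at hre'
      nlinarith
  -- vectors in distinct pairs are nonzero
  have hvnz : ∀ j k : Fin m, j ≠ k → v k ≠ 0 ∧ ∀ a : ℝ, a • v k ≠ v j := by
    intro j k hjk
    have := (linearIndependent_fin2).mp (hpair j k hjk)
    simpa using this
  have hznz : ∀ j k : Fin m, j ≠ k → z j ≠ 0 := by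
    intro j k hjk hzj
    have hvj : v j ≠ 0 := (hvnz k j hjk.symm).1
    apply hvj
    have h0 : w j 0 = 0 := congrArg Complex.re hzj
    have h1 : w j 1 = 0 := congrArg Complex.im hzj
    rw [hw0] at h0; rw [hw1] at h1
    funext i
    fin_cases i
    · exact (mul_eq_zero.mp h0).resolve_left (hεne j)
    · exact (mul_eq_zero.mp h1).resolve_left (hεne j)
  -- θ is injective
  have hθinj : Function.Injective θ := by
    intro j k hjk
    by_contra hne
    have hzj := hznz j k hne
    have hzk := hznz k j (Ne.symm hne)
    have := (Complex.arg_eq_arg_iff hzj hzk).mp hjk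
    set c : ℝ := ‖z k‖ / ‖z j‖ with hc
    have hre : c * w j 0 = w k 0 := by
      have := congrArg Complex.re this
      simpa [Complex.mul_re] using this
    have himeq : c * w j 1 = w k 1 := by
      have := congrArg Complex.im this
      simpa [Complex.mul_im] using this
    -- derive a • v j = v k, contradiction
    have hkey : (ε k * (c * ε j)) • v j = v k := by
      funext i
      fin_cases i
      · have h := hre
        rw [hw0, hw0] at h
        have hε2 : ε k * ε k = 1 := by
          rcases hεsign k with h' | h' <;> rw [h'] <;> ring
        show ε k * (c * ε j) * v j 0 = v k 0
        calc ε k * (c * ε j) * v j 0 = ε k * (c * (ε j * v j 0)) := by ring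
          _ = ε k * (ε k * v k 0) := by rw [h]
          _ = v k 0 := by rw [← mul_assoc, hε2, one_mul]
      · have h := himeq
        rw [hw1, hw1] at h
        have hε2 : ε k * ε k = 1 := by
          rcases hεsign k with h' | h' <;> rw [h'] <;> ring
        show ε k * (c * ε j) * v j 1 = v k 1
        calc ε k * (c * ε j) * v j 1 = ε k * (c * (ε j * v j 1)) := by ring
          _ = ε k * (ε k * v k 1) := by rw [h]
          _ = v k 1 := by rw [← mul_assoc, hε2, one_mul]

    exact (hvnz k j (Ne.symm hne)).2 _ hkey
  -- sort by angle
  set σ : Equiv.Perm (Fin m) := Tuple.sort θ with hσ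
  have hmono : StrictMono (θ ∘ σ) :=
    (Tuple.monotone_sort θ).strictMono_of_injective (hθinj.comp σ.injective)
  refine ⟨ε, σ, hεsign, ?_⟩
  intro j k hjk
  set a := σ j with ha
  set b := σ k with hb
  have hab : a ≠ b := fun h => (ne_of_lt hjk) (σ.injective h)
  have hza : z a ≠ 0 := hznz a b hab
  have hzb : z b ≠ 0 := hznz b a hab.symm
  have hθab : θ a < θ b := hmono hjk
  -- express coordinates via polar form
  have hra : 0 < ‖z a‖ := norm_pos_iff.mpr hza
  have hrb : 0 < ‖z b‖ := norm_pos_iff.mpr hzb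
  have hcosa : w a 0 = ‖z a‖ * Real.cos (θ a) := by
    rw [hθ]; rw [Complex.cos_arg hza]; field_simp; rfl
  have hsina : w a 1 = ‖z a‖ * Real.sin (θ a) := by
    rw [hθ]; rw [Complex.sin_arg]; field_simp; rfl
  have hcosb : w b 0 = ‖z b‖ * Real.cos (θ b) := by
    rw [hθ]; rw [Complex.cos_arg hzb]; field_simp; rfl
  have hsinb : w b 1 = ‖z b‖ * Real.sin (θ b) := by
    rw [hθ]; rw [Complex.sin_arg]; field_simp; rfl
  have key : w a 0 * w b 1 - w a 1 * w b 0
      = ‖z a‖ * ‖z b‖ * Real.sin (θ b - θ a) := by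
    rw [hcosa, hsina, hcosb, hsinb, Real.sin_sub]; ring
  have hsinpos : 0 < Real.sin (θ b - θ a) := by
    apply Real.sin_pos_of_pos_of_lt_pi
    · linarith
    · have := hθnonneg a; have := hθltpi b; linarith
  show 0 < w a 0 * w b 1 - w a 1 * w b 0
  rw [key]
  positivity
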